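/- Let F be a field and T : A → B an F-linear fully faithful functor between F-linear abelian semisimple categories in which every Hom-space is finite dimensional. Then T admits a left adjoint T_♯ and a right adjoint T_*. -/

import Mathlib

open CategoryTheory CategoryTheory.Limits ZeroObject

section Aux
variable {A : Type} [Category.{0} A] [Preadditive A] [Abelian A] [HasFiniteBiproducts A]
variable {B : Type} [Category.{0} B] [Preadditive B] [Abelian B] [HasFiniteBiproducts B]

/-- An indecomposable nonzero object in a semisimple category is simple. -/
lemma aux_simple
    (hB : ∀ X : B, ∃ (n : ℕ) (f : Fin n → B), (∀ i, Simple (f i)) ∧ Nonempty (X ≅ ⨁ f))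
    (Z : B) (hid : 𝟙 Z ≠ 0)
    (hidem : ∀ e : Z ⟶ Z, e ≫ e = e → e = 0 ∨ e = 𝟙 Z) : Simple Z := by
  obtain ⟨n, g, hg, ⟨ε⟩⟩ := hB Z
  rcases n with _ | m
  · exfalso
    apply hid
    have h0 : (𝟙 (⨁ g)) = 0 := biproduct.hom_ext _ _ (fun i => i.elim0)
    calc 𝟙 Z = ε.hom ≫ 𝟙 (⨁ g) ≫ ε.inv := by simp
      _ = 0 := by rw [h0]; simp
  · haveI := hg 0
    set e : Z ⟶ Z := ε.hom ≫ biproduct.π g 0 ≫ biproduct.ι g 0 ≫ ε.inv with he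
    have hee : e ≫ e = e := by
      simp [he]
    have hne : e ≠ 0 := by
      intro h0
      have h1 : biproduct.π g 0 ≫ biproduct.ι g 0 = 0 := by
        have := congrArg (fun t => ε.inv ≫ t ≫ ε.hom) h0
        simpa [he] using this
      have h2 : (𝟙 (g 0) : g 0 ⟶ g 0) = 0 := by
        have := congrArg (fun t => biproduct.ι g 0 ≫ t ≫ biproduct.π g 0) h1
        simpa using this
      exact id_nonzero (g 0) h2
    have hei : e = 𝟙 Z := (hidem e hee).resolve_left hne
    exact Simple.of_iso ⟨ε.hom ≫ biproduct.π g 0, biproduct.ι g 0 ≫ ε.inv,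
      by simpa [he] using hei, by simp⟩

/-- A fully faithful additive functor sends simples to simples (given semisimplicity of B). -/
lemma aux_T_simple
    (hB : ∀ X : B, ∃ (n : ℕ) (f : Fin n → B), (∀ i, Simple (f i)) ∧ Nonempty (X ≅ ⨁ f))
    (T : A ⥤ B) [T.Additive] [T.Full] [T.Faithful]
    (S : A) [Simple S] : Simple (T.obj S) := by
  apply aux_simple hB
  · intro h
    apply id_nonzero S
    apply T.map_injective
    simp [h]
  · intro e hee
    set p : S ⟶ S := T.preimage e with hp
    have hpp : p ≫ p = p := by
      apply T.map_injective
      simp [hp, hee]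
    by_cases hp0 : p = 0
    · left
      have : e = T.map p := by simp [hp]
      rw [this, hp0]; simp
    · right
      haveI : IsIso p := isIso_of_hom_simple hp0
      have hp1 : p = 𝟙 S := by
        have : p ≫ p = p ≫ 𝟙 S := by simpa using hpp
        exact (cancel_epi p).mp this
      have : e = T.map p := by simp [hp]
      rw [this, hp1]; simp

/-- If a simple `W` is not in the essential image of `T`, all maps `T X ⟶ W` vanish. -/
lemma aux_zero_to
    (hA : ∀ X : A, ∃ (n : ℕ) (f : Fin n → A), (∀ i, Simple (f i)) ∧ Nonempty (X ≅ ⨁ f))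
    (hB : ∀ X : B, ∃ (n : ℕ) (f : Fin n → B), (∀ i, Simple (f i)) ∧ Nonempty (X ≅ ⨁ f))
    (T : A ⥤ B) [T.Additive] [T.Full] [T.Faithful]
    (W : B) [Simple W] (hW : ¬ ∃ S : A, Nonempty (T.obj S ≅ W))
    (X : A) (h : T.obj X ⟶ W) : h = 0 := by
  obtain ⟨n, f, hf, ⟨ε⟩⟩ := hA X
  haveI := hf
  set u : ⨁ (T.obj ∘ f) ⟶ W := (T.mapBiproduct f).inv ≫ T.map ε.inv ≫ h with hu
  have hu0 : u = 0 := by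
    apply biproduct.hom_ext'
    intro j
    by_contra hne
    haveI : Simple ((T.obj ∘ f) j) := aux_T_simple hB T (f j)
    haveI : IsIso (biproduct.ι (T.obj ∘ f) j ≫ u) := isIso_of_hom_simple (by simpa using hne)
    exact hW ⟨f j, ⟨asIso (biproduct.ι (T.obj ∘ f) j ≫ u)⟩⟩
  have : h = T.map ε.hom ≫ (T.mapBiproduct f).hom ≫ u := by
    rw [hu, Iso.hom_inv_id_assoc, ← T.map_comp_assoc, ε.hom_inv_id, T.map_id, Category.id_comp]
  rw [this, hu0]; simp; exact Limits.comp_zero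

/-- Dual: all maps `W ⟶ T X` vanish. -/
lemma aux_zero_from
    (hA : ∀ X : A, ∃ (n : ℕ) (f : Fin n → A), (∀ i, Simple (f i)) ∧ Nonempty (X ≅ ⨁ f))
    (hB : ∀ X : B, ∃ (n : ℕ) (f : Fin n → B), (∀ i, Simple (f i)) ∧ Nonempty (X ≅ ⨁ f))
    (T : A ⥤ B) [T.Additive] [T.Full] [T.Faithful]
    (W : B) [Simple W] (hW : ¬ ∃ S : A, Nonempty (T.obj S ≅ W))
    (X : A) (h : W ⟶ T.obj X) : h = 0 := by
  obtain ⟨n, f, hf, ⟨ε⟩⟩ := hA X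
  haveI := hf
  set u : W ⟶ ⨁ (T.obj ∘ f) := h ≫ T.map ε.hom ≫ (T.mapBiproduct f).hom with hu
  have hu0 : u = 0 := by
    apply biproduct.hom_ext
    intro j
    by_contra hne
    haveI : Simple ((T.obj ∘ f) j) := aux_T_simple hB T (f j)
    haveI : IsIso (u ≫ biproduct.π (T.obj ∘ f) j) := isIso_of_hom_simple (by simpa using hne)
    exact hW ⟨f j, ⟨(asIso (u ≫ biproduct.π (T.obj ∘ f) j)).symm⟩⟩
  have : h = u ≫ (T.mapBiproduct f).inv ≫ T.map ε.inv := by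
    simp only [hu, Category.assoc, Iso.hom_inv_id_assoc, ← Functor.map_comp, Iso.hom_inv_id,
      Functor.map_id, Category.comp_id]
    simp
  rw [this, hu0]; simp

end Aux

theorem stmt1 {F : Type} [Field F]
    {A : Type} [Category.{0} A] [Preadditive A] [Linear F A] [Abelian A] [HasFiniteBiproducts A]
    {B : Type} [Category.{0} B] [Preadditive B] [Linear F B] [Abelian B] [HasFiniteBiproducts B]
    (hA : ∀ X : A, ∃ (n : ℕ) (f : Fin n → A), (∀ i, Simple (f i)) ∧ Nonempty (X ≅ ⨁ f))
    (hB : ∀ X : B, ∃ (n : ℕ) (f : Fin n → B), (∀ i, Simple (f i)) ∧ Nonempty (X ≅ ⨁ f))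
    (hfinA : ∀ X Y : A, FiniteDimensional F (X ⟶ Y))
    (hfinB : ∀ X Y : B, FiniteDimensional F (X ⟶ Y))
    (T : A ⥤ B) [T.Additive] [T.Linear F] [T.Full] [T.Faithful] :
    T.IsRightAdjoint ∧ T.IsLeftAdjoint := by
  classical
  have key : ∀ W : B, Simple W → ∃ SW : A,
      ∃ (er : ∀ X : A, (T.obj X ⟶ W) ≃ (X ⟶ SW))
        (el : ∀ X : A, (SW ⟶ X) ≃ (W ⟶ T.obj X)),
      (∀ (X' X : A) (f : X' ⟶ X) (g : T.obj X ⟶ W), er X' (T.map f ≫ g) = f ≫ er X g) ∧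
      (∀ (X X' : A) (g : X ⟶ X') (h : SW ⟶ X), el X' (h ≫ g) = el X h ≫ T.map g) := by
    intro W hW
    haveI := hW
    by_cases hex : ∃ S : A, Nonempty (T.obj S ≅ W)
    · obtain ⟨S, ⟨φ⟩⟩ := hex
      refine ⟨S,
        fun X => ⟨fun h => T.preimage (h ≫ φ.inv), fun p => T.map p ≫ φ.hom, ?_, ?_⟩,
        fun X => ⟨fun p => φ.inv ≫ T.map p, fun h => T.preimage (φ.hom ≫ h), ?_, ?_⟩,
        ?_, ?_⟩
      · intro h
        simp
      · intro p
        simp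
      · intro p
        simp
      · intro h
        simp
      · intro X' X f g
        apply T.map_injective
        simp
      · intro X X' g h
        simp
    · refine ⟨(0 : A),
        fun X => ⟨fun _ => 0, fun _ => 0, ?_, ?_⟩,
        fun X => ⟨fun _ => 0, fun _ => 0, ?_, ?_⟩,
        ?_, ?_⟩
      · intro h
        exact (aux_zero_to hA hB T W hex X h).symm
      · intro p
        exact (isZero_zero A).eq_of_tgt _ _
      · intro p
        exact (isZero_zero A).eq_of_src _ _
      · intro h
        exact (aux_zero_from hA hB T W hex X h).symm
      · intro X' X f g
        simp
      · intro X X' g h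
        simp
  choose SW er el her hel using key
  choose n g hg hiso using hB
  let ε : ∀ Y : B, Y ≅ ⨁ (g Y) := fun Y => (hiso Y).some
  let Gobj : B → A := fun Y => ⨁ (fun i => SW (g Y i) (hg Y i))
  -- Right adjoint
  have right : T.IsLeftAdjoint := by
    let e : ∀ (X : A) (Y : B), (T.obj X ⟶ Y) ≃ (X ⟶ Gobj Y) := fun X Y =>
      { toFun := fun h => biproduct.lift
          (fun i => er (g Y i) (hg Y i) X (h ≫ (ε Y).hom ≫ biproduct.π (g Y) i))
        invFun := fun p => biproduct.lift
          (fun i => (er (g Y i) (hg Y i) X).symm (p ≫ biproduct.π _ i)) ≫ (ε Y).inv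
        left_inv := by
          intro h
          simp only [biproduct.lift_π, Equiv.symm_apply_apply]
          have hh : biproduct.lift (fun i => h ≫ (ε Y).hom ≫ biproduct.π (g Y) i)
              = h ≫ (ε Y).hom := biproduct.hom_ext _ _ (fun j => by simp)
          rw [hh]; simp
        right_inv := by
          intro p
          apply biproduct.hom_ext
          intro j
          simp }
    have he : ∀ (X' X : A) (Y : B) (f : X' ⟶ X) (h : T.obj X ⟶ Y),
        e X' Y (T.map f ≫ h) = f ≫ e X Y h := by
      intro X' X Y f h
      apply biproduct.hom_ext
      intro j
      simp [e, her]
    exact (Adjunction.adjunctionOfEquivRight e (fun X' X Y f h => he X' X Y f h)).isLeftAdjoint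
  -- Left adjoint
  have left : T.IsRightAdjoint := by
    let e : ∀ (Y : B) (X : A), (Gobj Y ⟶ X) ≃ (Y ⟶ T.obj X) := fun Y X =>
      { toFun := fun h => (ε Y).hom ≫ biproduct.desc
          (fun i => el (g Y i) (hg Y i) X (biproduct.ι (fun i => SW (g Y i) (hg Y i)) i ≫ h))
        invFun := fun k => biproduct.desc
          (fun i => (el (g Y i) (hg Y i) X).symm (biproduct.ι (g Y) i ≫ (ε Y).inv ≫ k))
        left_inv := by
          intro h
          ext j
          simp
        right_inv := by
          intro k
          simp only [biproduct.ι_desc, Equiv.apply_symm_apply]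
          rw [← cancel_epi (ε Y).inv, Iso.inv_hom_id_assoc]
          exact biproduct.hom_ext' _ _ (fun j => by simp) }
    have he : ∀ (Y : B) (X X' : A) (gg : X ⟶ X') (h : Gobj Y ⟶ X),
        e Y X' (h ≫ gg) = e Y X h ≫ T.map gg := by
      intro Y X X' gg h
      have h1 : ∀ i, el (g Y i) (hg Y i) X' (biproduct.ι (fun i => SW (g Y i) (hg Y i)) i ≫ h ≫ gg)
          = el (g Y i) (hg Y i) X (biproduct.ι (fun i => SW (g Y i) (hg Y i)) i ≫ h) ≫ T.map gg := by
        intro i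
        rw [← Category.assoc, hel]
      have h2 : biproduct.desc (fun i => el (g Y i) (hg Y i) X (biproduct.ι (fun i => SW (g Y i) (hg Y i)) i ≫ h)) ≫ T.map gg
          = biproduct.desc (fun i => el (g Y i) (hg Y i) X (biproduct.ι (fun i => SW (g Y i) (hg Y i)) i ≫ h) ≫ T.map gg) :=
        biproduct.hom_ext' _ _ (fun j => by simp)
      simp only [e, Equiv.coe_fn_mk, h1, Category.assoc, h2]
    exact (Adjunction.adjunctionOfEquivLeft e (fun Y X X' gg h => he Y X X' gg h)).isRightAdjoint
  exact ⟨left, right⟩
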